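/- Let Z, Z⁽¹⁾ be functions from coordinate pairs to ℝ agreeing everywhere except at one coordinate (k₀,t₀), where Z⁽¹⁾ takes value u. For the convolutional sparse coding cost E(Z) = (1/2)‖X - Σ_k Z_k * D_k‖₂² + λ Σ_k ‖Z_k‖₁, the cost variation satisfies E(Z) - E(Z⁽¹⁾) = (‖D_{k₀}‖₂²/2)(Z_{k₀}[t₀]² - u²) - β_{k₀}[t₀](Z_{k₀}[t₀] - u) + λ(|Z_{k₀}[t₀]| - |u|), where β_{k₀}[t₀] = (D̃_{k₀} * (X - Σ_{k≠k₀} Z_k * D_k - Φ_{t₀}(Z_{k₀}) * D_{k₀}))[t₀]. -/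

import Mathlib

/-- Convolutional sparse coding cost
`E(Z) = (1/2)‖X - Σ_k Z_k * D_k‖₂² + λ Σ_k ‖Z_k‖₁`, with convolutions of length-`W`
atoms evaluated on `⟦0, T-1⟧` and the ℓ₁ norm over `⟦0, L-1⟧`. -/
noncomputable def cE (P K W T L : ℕ) (lam : ℝ) (X : ℤ → Fin P → ℝ)
    (D : Fin K → ℤ → Fin P → ℝ) (Z : Fin K → ℤ → ℝ) : ℝ :=
  (1 / 2) * ∑ t ∈ Finset.Ico (0 : ℤ) T, ∑ p : Fin P,
      (X t p - ∑ k : Fin K, ∑ τ ∈ Finset.Ico (0 : ℤ) W, Z k (t - τ) * D k τ p) ^ 2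
  + lam * ∑ k : Fin K, ∑ t ∈ Finset.Ico (0 : ℤ) L, |Z k t|

/-- Squared ℓ₂ norm `‖D_k‖₂²` of a dictionary atom. -/
noncomputable def nrm2 (P W : ℕ) (Dk : ℤ → Fin P → ℝ) : ℝ :=
  ∑ τ ∈ Finset.Ico (0 : ℤ) W, ∑ p : Fin P, (Dk τ p) ^ 2

/-- `β_k[t] = (D̃_k * (X - Σ_{k'≠k} Z_{k'}*D_{k'} - Φ_t(Z_k)*D_k))[t]`
(cross-correlation of the atom `D_k` with the residual excluding coefficient `(k,t)`). -/
noncomputable def betaC (P K W : ℕ) (X : ℤ → Fin P → ℝ)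
    (D : Fin K → ℤ → Fin P → ℝ) (Z : Fin K → ℤ → ℝ) (k : Fin K) (t : ℤ) : ℝ :=
  ∑ s ∈ Finset.Ico (0 : ℤ) W, ∑ p : Fin P,
    D k s p * (X (t + s) p
      - ∑ k' ∈ Finset.univ.erase k, ∑ τ ∈ Finset.Ico (0 : ℤ) W,
          Z k' (t + s - τ) * D k' τ p
      - ∑ τ ∈ Finset.Ico (0 : ℤ) W,
          (if t + s - τ = t then 0 else Z k (t + s - τ)) * D k τ p)

/-- Single-coordinate cost variation: if `Z⁽¹⁾` agrees with `Z` except at `(k₀, t₀)`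
where it takes value `u`, then
`E(Z) - E(Z⁽¹⁾) = (‖D_{k₀}‖₂²/2)(Z_{k₀}[t₀]² - u²) - β_{k₀}[t₀](Z_{k₀}[t₀] - u)
  + λ(|Z_{k₀}[t₀]| - |u|)`. -/
theorem stmt5 (P K W T L : ℕ) (hW : 1 ≤ W) (hT : (T : ℤ) = (L : ℤ) + W - 1)
    (lam : ℝ) (X : ℤ → Fin P → ℝ) (D : Fin K → ℤ → Fin P → ℝ)
    (hD : ∀ k (t : ℤ), (t < 0 ∨ (W : ℤ) ≤ t) → ∀ p, D k t p = 0)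
    (Z : Fin K → ℤ → ℝ) (k0 : Fin K) (t0 : ℤ)
    (ht0 : 0 ≤ t0) (ht0' : t0 + W ≤ T) (u : ℝ) :
    cE P K W T L lam X D Z
      - cE P K W T L lam X D (fun k t => if k = k0 ∧ t = t0 then u else Z k t)
    = nrm2 P W (D k0) / 2 * ((Z k0 t0) ^ 2 - u ^ 2)
      - betaC P K W X D Z k0 t0 * (Z k0 t0 - u)
      + lam * (|Z k0 t0| - |u|) := by
  classical
  set c := Z k0 t0 with hc
  set Z' : Fin K → ℤ → ℝ := fun k t => if k = k0 ∧ t = t0 then 0 else Z k t with hZ'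
  set S : ℤ → Fin P → ℝ := fun t p =>
    ∑ k : Fin K, ∑ τ ∈ Finset.Ico (0 : ℤ) W, Z' k (t - τ) * D k τ p with hS
  -- key convolution decomposition
  have key : ∀ (v : ℝ) (t : ℤ) (p : Fin P),
      (∑ k : Fin K, ∑ τ ∈ Finset.Ico (0 : ℤ) W,
        (if k = k0 ∧ t - τ = t0 then v else Z k (t - τ)) * D k τ p)
      = S t p + v * D k0 (t - t0) p := by
    intro v t p
    have hpt : ∀ k : Fin K, ∀ τ ∈ Finset.Ico (0 : ℤ) W,
        (if k = k0 ∧ t - τ = t0 then v else Z k (t - τ)) * D k τ p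
        = Z' k (t - τ) * D k τ p
          + (if k = k0 then (if τ = t - t0 then v * D k τ p else 0) else 0) := by
      intro k τ _
      by_cases hk : k = k0
      · by_cases hτ : t - τ = t0
        · have h2 : τ = t - t0 := by omega
          simp [hZ', hk, hτ, h2]
        · have h2 : τ ≠ t - t0 := by omega
          simp [hZ', hk, hτ, h2]
      · simp [hZ', hk]
    rw [Finset.sum_congr rfl fun k _ => Finset.sum_congr rfl (hpt k)]
    simp only [Finset.sum_add_distrib]
    congr 1
    have pull : ∀ k ∈ (Finset.univ : Finset (Fin K)),
        (∑ τ ∈ Finset.Ico (0 : ℤ) W,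
          (if k = k0 then (if τ = t - t0 then v * D k τ p else 0) else 0))
        = (if k = k0 then
            ∑ τ ∈ Finset.Ico (0 : ℤ) W, (if τ = t - t0 then v * D k τ p else 0) else 0) := by
      intro k _
      split <;> simp
    rw [Finset.sum_congr rfl pull, Finset.sum_ite_eq' Finset.univ k0]
    simp only [Finset.mem_univ, if_true, Finset.sum_ite_eq' (Finset.Ico (0 : ℤ) W)]
    by_cases hmem : t - t0 ∈ Finset.Ico (0 : ℤ) (W : ℤ)
    · simp [hmem]
    · rw [hD k0 (t - t0) (by simp only [Finset.mem_Ico] at hmem; omega) p]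
      simp [hmem]
  have keyc : ∀ (t : ℤ) (p : Fin P),
      (∑ k : Fin K, ∑ τ ∈ Finset.Ico (0 : ℤ) W, Z k (t - τ) * D k τ p)
      = S t p + c * D k0 (t - t0) p := by
    intro t p
    rw [← key c t p]
    refine Finset.sum_congr rfl fun k _ => Finset.sum_congr rfl fun τ _ => ?_
    by_cases h : k = k0 ∧ t - τ = t0
    · obtain ⟨h1, h2⟩ := h
      rw [if_pos ⟨h1, h2⟩, h1, h2]
    · rw [if_neg h]
  -- splitting S
  have hSsplit : ∀ (t : ℤ) (p : Fin P),
      S t p = (∑ τ ∈ Finset.Ico (0 : ℤ) W,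
          (if t - τ = t0 then 0 else Z k0 (t - τ)) * D k0 τ p)
        + ∑ k' ∈ Finset.univ.erase k0, ∑ τ ∈ Finset.Ico (0 : ℤ) W,
            Z k' (t - τ) * D k' τ p := by
    intro t p
    rw [hS]
    simp only []
    rw [← Finset.add_sum_erase _ _ (Finset.mem_univ k0)]
    congr 1
    · refine Finset.sum_congr rfl fun τ _ => ?_
      simp [hZ']
    · refine Finset.sum_congr rfl fun k hk => Finset.sum_congr rfl fun τ _ => ?_
      have hkk : k ≠ k0 := (Finset.mem_erase.mp hk).1
      simp [hZ', hkk]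
  -- shift lemma
  have hshift : ∀ f : ℤ → ℝ,
      ∑ t ∈ Finset.Ico (0 : ℤ) T, f (t - t0)
      = ∑ s ∈ Finset.Ico (-t0) ((T : ℤ) - t0), f s := by
    intro f
    rw [show Finset.Ico (0 : ℤ) (T : ℤ)
        = Finset.map (addLeftEmbedding t0) (Finset.Ico (-t0) ((T : ℤ) - t0)) from by
      rw [Finset.map_add_left_Ico]; congr 1 <;> ring]
    rw [Finset.sum_map]
    refine Finset.sum_congr rfl fun s _ => ?_
    simp [addLeftEmbedding]
  have hsubset : Finset.Ico (0 : ℤ) (W : ℤ) ⊆ Finset.Ico (-t0) ((T : ℤ) - t0) := by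
    intro s hs
    simp only [Finset.mem_Ico] at hs ⊢
    omega
  -- N = nrm2
  have hN : (∑ t ∈ Finset.Ico (0 : ℤ) T, ∑ p : Fin P, (D k0 (t - t0) p) ^ 2)
      = nrm2 P W (D k0) := by
    rw [hshift (fun s => ∑ p : Fin P, (D k0 s p) ^ 2)]
    rw [← Finset.sum_subset hsubset]
    · rfl
    · intro s _ hs
      simp only [Finset.mem_Ico] at hs
      have : D k0 s = fun _ => 0 := funext (hD k0 s (by omega))
      simp [this]
  -- B = betaC
  have hB : (∑ t ∈ Finset.Ico (0 : ℤ) T, ∑ p : Fin P, (X t p - S t p) * D k0 (t - t0) p)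
      = betaC P K W X D Z k0 t0 := by
    have step1 : (∑ t ∈ Finset.Ico (0 : ℤ) T, ∑ p : Fin P,
          (X t p - S t p) * D k0 (t - t0) p)
        = ∑ t ∈ Finset.Ico (0 : ℤ) T,
            (fun s => ∑ p : Fin P, (X (s + t0) p - S (s + t0) p) * D k0 s p) (t - t0) := by
      refine Finset.sum_congr rfl fun t _ => ?_
      simp [sub_add_cancel]
    rw [step1, hshift (fun s => ∑ p : Fin P, (X (s + t0) p - S (s + t0) p) * D k0 s p),
      ← Finset.sum_subset hsubset]
    · unfold betaC
      refine Finset.sum_congr rfl fun s _ => Finset.sum_congr rfl fun p _ => ?_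
      rw [show s + t0 = t0 + s from add_comm s t0, hSsplit (t0 + s) p]
      ring
    · intro s _ hs
      simp only [Finset.mem_Ico] at hs
      have : D k0 s = fun _ => 0 := funext (hD k0 s (by omega))
      simp [this]
  -- ℓ1 part
  have ht0L : t0 ∈ Finset.Ico (0 : ℤ) (L : ℤ) := by
    simp only [Finset.mem_Ico]
    omega
  have hL1 : (∑ k : Fin K, ∑ t ∈ Finset.Ico (0 : ℤ) L, |Z k t|)
      - (∑ k : Fin K, ∑ t ∈ Finset.Ico (0 : ℤ) L,
          |(fun k t => if k = k0 ∧ t = t0 then u else Z k t) k t|)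
      = |c| - |u| := by
    have hpt : ∀ k : Fin K, ∀ t ∈ Finset.Ico (0 : ℤ) (L : ℤ),
        |Z k t| - |if k = k0 ∧ t = t0 then u else Z k t|
        = (if k = k0 then (if t = t0 then |c| - |u| else 0) else 0) := by
      intro k t _
      by_cases hk : k = k0
      · by_cases ht : t = t0
        · rw [hk, ht, hc]; simp
        · simp [hk, ht]
      · simp [hk]
    rw [← Finset.sum_sub_distrib]
    rw [Finset.sum_congr rfl fun k _ => (Finset.sum_sub_distrib _ _).symm]
    rw [Finset.sum_congr rfl fun k _ => Finset.sum_congr rfl (hpt k)]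
    have pull : ∀ k ∈ (Finset.univ : Finset (Fin K)),
        (∑ t ∈ Finset.Ico (0 : ℤ) L,
          (if k = k0 then (if t = t0 then |c| - |u| else 0) else 0))
        = (if k = k0 then
            ∑ t ∈ Finset.Ico (0 : ℤ) L, (if t = t0 then |c| - |u| else 0) else 0) := by
      intro k _
      split <;> simp
    rw [Finset.sum_congr rfl pull, Finset.sum_ite_eq' Finset.univ k0]
    simp [Finset.sum_ite_eq' (Finset.Ico (0 : ℤ) (L : ℤ)), ht0L]
  -- rewriting both costs
  have e1 : cE P K W T L lam X D Z
      = (1 / 2) * (∑ t ∈ Finset.Ico (0 : ℤ) T, ∑ p : Fin P,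
          (X t p - (S t p + c * D k0 (t - t0) p)) ^ 2)
        + lam * (∑ k : Fin K, ∑ t ∈ Finset.Ico (0 : ℤ) L, |Z k t|) := by
    unfold cE
    congr 2
    refine Finset.sum_congr rfl fun t _ => Finset.sum_congr rfl fun p _ => ?_
    rw [keyc]
  have e2 : cE P K W T L lam X D (fun k t => if k = k0 ∧ t = t0 then u else Z k t)
      = (1 / 2) * (∑ t ∈ Finset.Ico (0 : ℤ) T, ∑ p : Fin P,
          (X t p - (S t p + u * D k0 (t - t0) p)) ^ 2)
        + lam * (∑ k : Fin K, ∑ t ∈ Finset.Ico (0 : ℤ) L,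
            |(fun k t => if k = k0 ∧ t = t0 then u else Z k t) k t|) := by
    unfold cE
    congr 2
    refine Finset.sum_congr rfl fun t _ => Finset.sum_congr rfl fun p _ => ?_
    rw [← key u t p]
  -- quadratic difference
  have hQ : (∑ t ∈ Finset.Ico (0 : ℤ) T, ∑ p : Fin P,
        (X t p - (S t p + c * D k0 (t - t0) p)) ^ 2)
      - (∑ t ∈ Finset.Ico (0 : ℤ) T, ∑ p : Fin P,
        (X t p - (S t p + u * D k0 (t - t0) p)) ^ 2)
      = (c ^ 2 - u ^ 2) * (∑ t ∈ Finset.Ico (0 : ℤ) T, ∑ p : Fin P, (D k0 (t - t0) p) ^ 2)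
        - 2 * ((c - u) * ∑ t ∈ Finset.Ico (0 : ℤ) T, ∑ p : Fin P,
            (X t p - S t p) * D k0 (t - t0) p) := by
    rw [← Finset.sum_sub_distrib]
    rw [Finset.sum_congr rfl fun t _ => (Finset.sum_sub_distrib _ _).symm]
    rw [Finset.sum_congr rfl fun t _ => Finset.sum_congr rfl fun p _ =>
      (show (X t p - (S t p + c * D k0 (t - t0) p)) ^ 2
          - (X t p - (S t p + u * D k0 (t - t0) p)) ^ 2
        = (c ^ 2 - u ^ 2) * (D k0 (t - t0) p) ^ 2
          - 2 * ((c - u) * ((X t p - S t p) * D k0 (t - t0) p)) by ring)]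
    simp only [Finset.sum_sub_distrib, ← Finset.mul_sum]
  rw [e1, e2, ← hN, ← hB]
  linear_combination (1 / 2 : ℝ) * hQ + lam * hL1
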